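/- Let π be an ε-almost representation of (Γ,S), and define D: C¹ → C² by Df((s₁,s₂)) = f(s₁) − f(s₂). Then for every f ∈ C¹: |⟨Df, Df⟩_{C²} − (1/3)⟨d₂f, d₂f⟩_{C²} − ⟨f,f⟩_{C¹}| ≤ (10/3) ε ⟨f,f⟩_{C¹}. -/

import Mathlib

open Finset ContinuousLinearMap

def edgeSet {G : Type*} [Group G] [DecidableEq G] (S : Finset G) : Finset (G × G) :=
  (S ×ˢ S).filter fun p => p.1⁻¹ * p.2 ∈ S

def deg {G : Type*} [Group G] [DecidableEq G] (S : Finset G) (s : G) : ℕ :=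
  (S.filter fun s' => s⁻¹ * s' ∈ S).card

def IsAlmostRep {G : Type*} [Group G] {H : Type*} [NormedAddCommGroup H]
    [InnerProductSpace ℂ H] [CompleteSpace H]
    (S : Finset G) (ε : ℝ) (π : G → H →L[ℂ] H) : Prop :=
  (∀ s ∈ S, π s ∈ unitary (H →L[ℂ] H)) ∧
  (∀ s ∈ S, π s⁻¹ = star (π s)) ∧
  ∀ s₁ ∈ S, ∀ s₂ ∈ S, s₁ * s₂ ∈ S → ‖π (s₁ * s₂) - (π s₁).comp (π s₂)‖ ≤ ε

/-- `d₂ f ((s,s')) = f(s) − f(s') + π(s) f(s⁻¹s')`. -/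
def d2 {G : Type*} [Group G] {H : Type*} [NormedAddCommGroup H] [InnerProductSpace ℂ H]
    (π : G → H →L[ℂ] H) (f : G → H) (p : G × G) : H :=
  f p.1 - f p.2 + π p.1 (f (p.1⁻¹ * p.2))

section AuxHelpers

variable {G : Type*} [Group G] [DecidableEq G]

lemma mem_edgeSet_aux {S : Finset G} {p : G × G} :
    p ∈ edgeSet S ↔ p.1 ∈ S ∧ p.2 ∈ S ∧ p.1⁻¹ * p.2 ∈ S := by
  simp [edgeSet, Finset.mem_filter, Finset.mem_product, and_assoc]

lemma sum_edge_reindex (S : Finset G) (hsym : ∀ s ∈ S, s⁻¹ ∈ S)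
    {M : Type*} [AddCommMonoid M] (h : G × G → M) :
    ∑ p ∈ edgeSet S, h (p.1⁻¹, p.1⁻¹ * p.2) = ∑ p ∈ edgeSet S, h p := by
  refine Finset.sum_nbij' (fun p => (p.1⁻¹, p.1⁻¹ * p.2)) (fun p => (p.1⁻¹, p.1⁻¹ * p.2))
    ?_ ?_ ?_ ?_ ?_
  · rintro ⟨a, b⟩ hp
    obtain ⟨h1, h2, h3⟩ := mem_edgeSet_aux.mp hp
    exact mem_edgeSet_aux.mpr ⟨hsym _ h1, h3, by simpa using h2⟩
  · rintro ⟨a, b⟩ hp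
    obtain ⟨h1, h2, h3⟩ := mem_edgeSet_aux.mp hp
    exact mem_edgeSet_aux.mpr ⟨hsym _ h1, h3, by simpa using h2⟩
  · rintro ⟨a, b⟩ _; simp
  · rintro ⟨a, b⟩ _; simp
  · rintro ⟨a, b⟩ _; rfl

lemma sum_edge_swap (S : Finset G) (hsym : ∀ s ∈ S, s⁻¹ ∈ S)
    {M : Type*} [AddCommMonoid M] (h : G × G → M) :
    ∑ p ∈ edgeSet S, h (p.2, p.1) = ∑ p ∈ edgeSet S, h p := by
  refine Finset.sum_nbij' (fun p => (p.2, p.1)) (fun p => (p.2, p.1)) ?_ ?_ ?_ ?_ ?_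
  · rintro ⟨a, b⟩ hp
    obtain ⟨h1, h2, h3⟩ := mem_edgeSet_aux.mp hp
    refine mem_edgeSet_aux.mpr ⟨h2, h1, ?_⟩
    simpa [mul_inv_rev] using hsym _ h3
  · rintro ⟨a, b⟩ hp
    obtain ⟨h1, h2, h3⟩ := mem_edgeSet_aux.mp hp
    refine mem_edgeSet_aux.mpr ⟨h2, h1, ?_⟩
    simpa [mul_inv_rev] using hsym _ h3
  · rintro ⟨a, b⟩ _; rfl
  · rintro ⟨a, b⟩ _; rfl
  · rintro ⟨a, b⟩ _; rfl

lemma sum_edge_fst (S : Finset G) (g : G → ℝ) :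
    ∑ p ∈ edgeSet S, g p.1 = ∑ s ∈ S, (deg S s : ℝ) * g s := by
  rw [edgeSet, Finset.sum_filter, Finset.sum_product]
  refine Finset.sum_congr rfl fun s hs => ?_
  rw [← Finset.sum_filter]
  have : (∑ _a ∈ S.filter (fun a => s⁻¹ * a ∈ S), g s) = (deg S s : ℝ) * g s := by
    rw [Finset.sum_const, nsmul_eq_mul, deg]
  exact this

lemma sum_edge_snd (S : Finset G) (hsym : ∀ s ∈ S, s⁻¹ ∈ S) (g : G → ℝ) :
    ∑ p ∈ edgeSet S, g p.2 = ∑ s ∈ S, (deg S s : ℝ) * g s := by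
  rw [edgeSet, Finset.sum_filter, Finset.sum_product, Finset.sum_comm]
  refine Finset.sum_congr rfl fun s' hs' => ?_
  rw [← Finset.sum_filter]
  have hfe : (S.filter fun a => a⁻¹ * s' ∈ S) = (S.filter fun a => s'⁻¹ * a ∈ S) := by
    apply Finset.filter_congr
    intro s hs
    constructor
    · intro h; simpa [mul_inv_rev] using hsym _ h
    · intro h; simpa [mul_inv_rev] using hsym _ h
  have : (∑ _a ∈ S.filter (fun a => a⁻¹ * s' ∈ S), g s') = (deg S s' : ℝ) * g s' := by
    rw [Finset.sum_const, nsmul_eq_mul, hfe, deg]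
  exact this

lemma sum_edge_mid (S : Finset G) (hsym : ∀ s ∈ S, s⁻¹ ∈ S) (g : G → ℝ) :
    ∑ p ∈ edgeSet S, g (p.1⁻¹ * p.2) = ∑ s ∈ S, (deg S s : ℝ) * g s := by
  rw [← sum_edge_snd S hsym g, ← sum_edge_reindex S hsym (fun p => g p.2)]

variable {H : Type*} [NormedAddCommGroup H] [InnerProductSpace ℂ H] [CompleteSpace H]

lemma key_inner {S : Finset G} {ε : ℝ} {π : G → H →L[ℂ] H} (hπ : IsAlmostRep S ε π)
    {f : G → H} (hf : ∀ s ∈ S, f s⁻¹ = -(π s⁻¹ (f s)))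
    {s : G} (hs : s ∈ S) (x : H) :
    (inner ℂ (f s) (π s x) : ℂ) = -(inner ℂ (f s⁻¹) x : ℂ) := by
  have h1 : π s⁻¹ (f s) = -f s⁻¹ := by rw [hf s hs, neg_neg]
  rw [← ContinuousLinearMap.adjoint_inner_left (π s) x (f s),
      ← ContinuousLinearMap.star_eq_adjoint, ← hπ.2.1 s hs, h1, inner_neg_left]

lemma key_neg {S : Finset G} {ε : ℝ} {π : G → H →L[ℂ] H} (hπ : IsAlmostRep S ε π)
    {f : G → H} (hf : ∀ s ∈ S, f s⁻¹ = -(π s⁻¹ (f s)))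
    {t : G} (ht : t ∈ S) : π t (f t⁻¹) = -f t := by
  have h1 : π t * star (π t) = 1 := (Unitary.mem_iff.mp (hπ.1 t ht)).2
  rw [hf t ht, hπ.2.1 t ht, map_neg]
  rw [show π t ((star (π t)) (f t)) = (π t * star (π t)) (f t) from rfl, h1]
  rfl

lemma key_bound {S : Finset G} {ε : ℝ} {π : G → H →L[ℂ] H} (hπ : IsAlmostRep S ε π)
    {f : G → H} (hf : ∀ s ∈ S, f s⁻¹ = -(π s⁻¹ (f s)))
    {p : G × G} (hp : p ∈ edgeSet S) :
    |(inner ℂ (f p.2) (π p.1 (f (p.1⁻¹ * p.2))) : ℂ).re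
      + (inner ℂ (f p.2) (π p.2 (f (p.2⁻¹ * p.1))) : ℂ).re|
      ≤ ε * (‖f p.2‖ * ‖f (p.2⁻¹ * p.1)‖) := by
  obtain ⟨h1, h2, h3⟩ := mem_edgeSet_aux.mp hp
  set t := p.1⁻¹ * p.2 with hts
  have ht : p.1 * t = p.2 := by rw [hts]; group
  have hinv : t⁻¹ = p.2⁻¹ * p.1 := by rw [hts]; group
  have hd : ‖π p.2 - (π p.1).comp (π t)‖ ≤ ε := by
    have := hπ.2.2 p.1 h1 t h3 (by rw [ht]; exact h2)
    rwa [ht] at this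
  have hneg : π t (f t⁻¹) = -f t := key_neg hπ hf h3
  have key : π p.1 (f t) + π p.2 (f t⁻¹) = (π p.2 - (π p.1).comp (π t)) (f t⁻¹) := by
    rw [ContinuousLinearMap.sub_apply, ContinuousLinearMap.comp_apply, hneg, map_neg]
    abel
  have hsum : (inner ℂ (f p.2) (π p.1 (f t)) : ℂ).re
      + (inner ℂ (f p.2) (π p.2 (f (p.2⁻¹ * p.1))) : ℂ).re
      = (inner ℂ (f p.2) ((π p.2 - (π p.1).comp (π t)) (f t⁻¹)) : ℂ).re := by
    rw [← key, inner_add_right, Complex.add_re, hinv]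
  rw [hsum, ← hinv]
  calc |(inner ℂ (f p.2) ((π p.2 - (π p.1).comp (π t)) (f t⁻¹)) : ℂ).re|
      ≤ ‖(inner ℂ (f p.2) ((π p.2 - (π p.1).comp (π t)) (f t⁻¹)) : ℂ)‖ := by
        exact Complex.abs_re_le_norm _
    _ ≤ ‖f p.2‖ * ‖(π p.2 - (π p.1).comp (π t)) (f t⁻¹)‖ := norm_inner_le_norm _ _
    _ ≤ ‖f p.2‖ * (ε * ‖f t⁻¹‖) := by
        refine mul_le_mul_of_nonneg_left ?_ (norm_nonneg _)
        exact le_trans (ContinuousLinearMap.le_opNorm _ _)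
          (mul_le_mul_of_nonneg_right hd (norm_nonneg _))
    _ = ε * (‖f p.2‖ * ‖f t⁻¹‖) := by ring

end AuxHelpers

/-- `|⟨Df, Df⟩_{C²} − (1/3)⟨d₂f, d₂f⟩_{C²} − ⟨f,f⟩_{C¹}| ≤ (10/3) ε ⟨f,f⟩_{C¹}`,
where `Df((s₁,s₂)) = f(s₁) − f(s₂)`. -/
theorem stmt9 {G : Type*} [Group G] [DecidableEq G]
    {H : Type*} [NormedAddCommGroup H] [InnerProductSpace ℂ H] [CompleteSpace H]
    (S : Finset G) (hsym : ∀ s ∈ S, s⁻¹ ∈ S) (hone : (1 : G) ∉ S)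
    (ε : ℝ) (hε : 0 ≤ ε) (π : G → H →L[ℂ] H) (hπ : IsAlmostRep S ε π)
    (f : G → H) (hf : ∀ s ∈ S, f s⁻¹ = -(π s⁻¹ (f s))) :
    |∑ p ∈ edgeSet S, ‖f p.1 - f p.2‖ ^ 2
        - (1 / 3) * ∑ p ∈ edgeSet S, ‖d2 π f p‖ ^ 2
        - ∑ s ∈ S, (deg S s : ℝ) * ‖f s‖ ^ 2|
      ≤ (10 / 3) * ε * ∑ s ∈ S, (deg S s : ℝ) * ‖f s‖ ^ 2 := by
  set Q : ℝ := ∑ s ∈ S, (deg S s : ℝ) * ‖f s‖ ^ 2 with hQdef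
  have hQ0 : 0 ≤ Q := Finset.sum_nonneg fun s _ =>
    mul_nonneg (Nat.cast_nonneg _) (sq_nonneg _)
  have hA1 : ∑ p ∈ edgeSet S, ‖f p.1‖ ^ 2 = Q := sum_edge_fst S (fun s => ‖f s‖ ^ 2)
  have hA2 : ∑ p ∈ edgeSet S, ‖f p.2‖ ^ 2 = Q := sum_edge_snd S hsym (fun s => ‖f s‖ ^ 2)
  have hA3 : ∑ p ∈ edgeSet S, ‖f (p.1⁻¹ * p.2)‖ ^ 2 = Q :=
    sum_edge_mid S hsym (fun s => ‖f s‖ ^ 2)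
  have hA4 : ∑ p ∈ edgeSet S, ‖f (p.2⁻¹ * p.1)‖ ^ 2 = Q := by
    rw [← hA3]
    exact sum_edge_swap S hsym (fun p => ‖f (p.1⁻¹ * p.2)‖ ^ 2)
  set Y : ℝ := ∑ p ∈ edgeSet S, (inner ℂ (f p.1) (f p.2) : ℂ).re with hYdef
  set Z : ℝ := ∑ p ∈ edgeSet S, (inner ℂ (f p.2) (π p.1 (f (p.1⁻¹ * p.2))) : ℂ).re with hZdef
  set W : ℝ := ∑ p ∈ edgeSet S, (inner ℂ (f p.2) (π p.2 (f (p.2⁻¹ * p.1))) : ℂ).re with hWdef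
  -- F: ∑ re⟪f p.1, π p.1 f(p.1⁻¹p.2)⟫ = -Y
  have hF : ∑ p ∈ edgeSet S, (inner ℂ (f p.1) (π p.1 (f (p.1⁻¹ * p.2))) : ℂ).re = -Y := by
    have step : ∀ p ∈ edgeSet S,
        (inner ℂ (f p.1) (π p.1 (f (p.1⁻¹ * p.2))) : ℂ).re
          = -((inner ℂ (f p.1⁻¹) (f (p.1⁻¹ * p.2)) : ℂ).re) := by
      intro p hp
      obtain ⟨h1, _, _⟩ := mem_edgeSet_aux.mp hp
      rw [key_inner hπ hf h1, Complex.neg_re]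
    rw [Finset.sum_congr rfl step, ← Finset.sum_neg_distrib]
    exact sum_edge_reindex S hsym (fun q => -((inner ℂ (f q.1) (f q.2) : ℂ).re))
  -- W = -Y
  have hW : W = -Y := by
    rw [hWdef, ← hF]
    exact (sum_edge_swap S hsym
      (fun q => (inner ℂ (f q.2) (π q.2 (f (q.2⁻¹ * q.1))) : ℂ).re)).symm
  -- A = 2Q - 2Y
  have hA : ∑ p ∈ edgeSet S, ‖f p.1 - f p.2‖ ^ 2 = 2 * Q - 2 * Y := by
    have step : ∀ p ∈ edgeSet S, ‖f p.1 - f p.2‖ ^ 2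
        = ‖f p.1‖ ^ 2 + ‖f p.2‖ ^ 2 - 2 * (inner ℂ (f p.1) (f p.2) : ℂ).re := by
      intro p _
      rw [norm_sub_sq (𝕜 := ℂ)]
      simp only [RCLike.re_to_complex]
      ring
    rw [Finset.sum_congr rfl step, Finset.sum_sub_distrib, Finset.sum_add_distrib,
        hA1, hA2, ← Finset.mul_sum, ← hYdef]
    ring
  -- B = 3Q - 4Y - 2Z
  have hB : ∑ p ∈ edgeSet S, ‖d2 π f p‖ ^ 2 = 3 * Q - 4 * Y - 2 * Z := by
    have step : ∀ p ∈ edgeSet S, ‖d2 π f p‖ ^ 2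
        = ‖f p.1 - f p.2‖ ^ 2 + ‖f (p.1⁻¹ * p.2)‖ ^ 2
          + 2 * ((inner ℂ (f p.1) (π p.1 (f (p.1⁻¹ * p.2))) : ℂ).re
            - (inner ℂ (f p.2) (π p.1 (f (p.1⁻¹ * p.2))) : ℂ).re) := by
      intro p hp
      obtain ⟨h1, _, _⟩ := mem_edgeSet_aux.mp hp
      have hnm : ‖π p.1 (f (p.1⁻¹ * p.2))‖ = ‖f (p.1⁻¹ * p.2)‖ :=
        ContinuousLinearMap.norm_map_of_mem_unitary (hπ.1 p.1 h1) _
      rw [d2, norm_add_sq (𝕜 := ℂ), hnm, inner_sub_left]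
      simp only [RCLike.re_to_complex, Complex.sub_re]
      ring
    rw [Finset.sum_congr rfl step, Finset.sum_add_distrib, Finset.sum_add_distrib,
        hA3, ← Finset.mul_sum, Finset.sum_sub_distrib, hF, ← hZdef, hA]
    ring
  -- |Z + W| ≤ ε * Q
  have hZW : |Z + W| ≤ ε * Q := by
    have h1 : Z + W = ∑ p ∈ edgeSet S,
        ((inner ℂ (f p.2) (π p.1 (f (p.1⁻¹ * p.2))) : ℂ).re
          + (inner ℂ (f p.2) (π p.2 (f (p.2⁻¹ * p.1))) : ℂ).re) := by
      rw [hZdef, hWdef, Finset.sum_add_distrib]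
    rw [h1]
    calc |∑ p ∈ edgeSet S, ((inner ℂ (f p.2) (π p.1 (f (p.1⁻¹ * p.2))) : ℂ).re
          + (inner ℂ (f p.2) (π p.2 (f (p.2⁻¹ * p.1))) : ℂ).re)|
        ≤ ∑ p ∈ edgeSet S, |((inner ℂ (f p.2) (π p.1 (f (p.1⁻¹ * p.2))) : ℂ).re
          + (inner ℂ (f p.2) (π p.2 (f (p.2⁻¹ * p.1))) : ℂ).re)| :=
          Finset.abs_sum_le_sum_abs _ _
      _ ≤ ∑ p ∈ edgeSet S, ε * ((‖f p.2‖ ^ 2 + ‖f (p.2⁻¹ * p.1)‖ ^ 2) / 2) := by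
          refine Finset.sum_le_sum fun p hp => ?_
          refine le_trans (key_bound hπ hf hp) ?_
          refine mul_le_mul_of_nonneg_left ?_ hε
          nlinarith [sq_nonneg (‖f p.2‖ - ‖f (p.2⁻¹ * p.1)‖)]
      _ = ε * Q := by
          rw [← Finset.mul_sum]
          congr 1
          have : ∑ p ∈ edgeSet S, (‖f p.2‖ ^ 2 + ‖f (p.2⁻¹ * p.1)‖ ^ 2) / 2
              = (∑ p ∈ edgeSet S, ‖f p.2‖ ^ 2
                + ∑ p ∈ edgeSet S, ‖f (p.2⁻¹ * p.1)‖ ^ 2) / 2 := by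
            rw [← Finset.sum_add_distrib, Finset.sum_div]
          rw [this, hA2, hA4]
          ring
  have heq : ∑ p ∈ edgeSet S, ‖f p.1 - f p.2‖ ^ 2
      - (1 / 3) * ∑ p ∈ edgeSet S, ‖d2 π f p‖ ^ 2 - Q = (2 / 3) * (Z + W) := by
    rw [hA, hB, hW]
    ring
  rw [heq, abs_mul, abs_of_nonneg (by norm_num : (0:ℝ) ≤ (2:ℝ)/3)]
  calc (2 / 3) * |Z + W| ≤ (2 / 3) * (ε * Q) := by linarith
    _ ≤ (10 / 3) * ε * Q := by nlinarith
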